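/- Let V be a finite type of variables with a constraint system (P, N, S). If there exist assignments M, T : V → ZFSet such that M models the literals P and N and the pair (M, T) satisfies the Ξ-conditions for (P, N, S), then there exists an assignment M'' : V → ZFSet that models the whole system (P, N, S), i.e. M'' a = M'' b \ M'' c for every (a,b,c) ∈ P, M'' a ≠ M'' b \ M'' c for every (a,b,c) ∈ N, and M'' a = {M'' b} for every (a,b) ∈ S. -/

import Mathlib

/-- `M` models the positive literals `a = b \ c` in `P` and the negative literals
`a ≠ b \ c` in `N`. -/
def ModelsLits {V : Type*} (P N : Finset (V × V × V)) (M : V → ZFSet) : Prop :=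
  (∀ t ∈ P, M t.1 = M t.2.1 \ M t.2.2) ∧ (∀ t ∈ N, M t.1 ≠ M t.2.1 \ M t.2.2)

/-- `M` models the whole constraint system `(P, N, S)`. -/
def ModelsSystem {V : Type*} (P N : Finset (V × V × V)) (S : Finset (V × V))
    (M : V → ZFSet) : Prop :=
  ModelsLits P N M ∧ ∀ p ∈ S, M p.1 = {M p.2}

/-- The pair of assignments `(M, T)` satisfies the Ξ-conditions for the
constraint system `(P, N, S)`. -/
def XiConditions {V : Type*} (S : Finset (V × V)) (M T : V → ZFSet) : Prop :=
  (∀ p ∈ S, ¬ M p.1 ⊆ M p.2) ∧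
  (∀ p ∈ S, ∀ q ∈ S, (M p.2 = M q.2 ↔ M p.1 = M q.1)) ∧
  (∀ p ∈ S, ∀ v : V, M p.1 ∩ M v ≠ ∅ → M p.1 ⊆ M v) ∧
  (∀ p ∈ S, ∀ v : V, M p.1 ∩ M v ≠ ∅ → T p.2 ⊆ T v ∧ T p.2 ≠ T v) ∧
  (∀ u v : V, M u = M v → T u = T v)

open Classical in
/-- The modified assignment `M_{x,y}`. -/
noncomputable def modifyAssign {V : Type*} (M : V → ZFSet) (x y : V) : V → ZFSet :=
  fun v => if M x ∩ M v = ∅ then M v else (M v \ M x) ∪ {M y}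

namespace XiSatAux

noncomputable local instance {n : ℕ} (F : (Fin n → ZFSet) → ZFSet) : ZFSet.Definable n F :=
  Classical.allZFSetDefinable F

open Classical in
noncomputable def fstep {V : Type*} (M : V → ZFSet) (S : Finset (V × V)) (Ω : ZFSet)
    (g : ZFSet → ZFSet) (z : ZFSet) : ZFSet :=
  if h : ∃ q, q ∈ S ∧ z ∈ M q.1 then
    ZFSet.image g (M h.choose.2)
  else insert z {Ω}

noncomputable def fAux {V : Type*} (M : V → ZFSet) (S : Finset (V × V)) (Ω : ZFSet) :
    ℕ → ZFSet → ZFSet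
  | 0 => fun z => insert z {Ω}
  | k + 1 => fstep M S Ω (fAux M S Ω k)

theorem fAux_zero {V : Type*} (M : V → ZFSet) (S : Finset (V × V)) (Ω : ZFSet) (z : ZFSet) :
    fAux M S Ω 0 z = insert z {Ω} := rfl

theorem fAux_succ {V : Type*} (M : V → ZFSet) (S : Finset (V × V)) (Ω : ZFSet) (k : ℕ) :
    fAux M S Ω (k + 1) = fstep M S Ω (fAux M S Ω k) := rfl

theorem fstep_pos {V : Type*} (M : V → ZFSet) (S : Finset (V × V)) (Ω : ZFSet)
    (g : ZFSet → ZFSet) (z : ZFSet) (h : ∃ q, q ∈ S ∧ z ∈ M q.1) :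
    fstep M S Ω g z = ZFSet.image g (M h.choose.2) := by
  rw [fstep, dif_pos h]

theorem fstep_neg {V : Type*} (M : V → ZFSet) (S : Finset (V × V)) (Ω : ZFSet)
    (g : ZFSet → ZFSet) (z : ZFSet) (h : ¬ ∃ q, q ∈ S ∧ z ∈ M q.1) :
    fstep M S Ω g z = insert z {Ω} := by
  rw [fstep, dif_neg h]

theorem image_congr' {f g : ZFSet → ZFSet} {X : ZFSet} (h : ∀ z ∈ X, f z = g z) :
    ZFSet.image f X = ZFSet.image g X := by
  apply ZFSet.ext
  intro w
  simp only [ZFSet.mem_image]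
  constructor
  · rintro ⟨z, hz, rfl⟩; exact ⟨z, hz, (h z hz).symm⟩
  · rintro ⟨z, hz, rfl⟩; exact ⟨z, hz, h z hz⟩

universe u w

theorem regionize {I : Type*} [Fintype I] (X : I → ZFSet.{u}) :
    ∃ X' : I → ZFSet.{w},
      (∀ i j, X' i ⊆ X' j ↔ X i ⊆ X j) ∧
      (∀ i j, X' i = X' j ↔ X i = X j) ∧
      (∀ i j, X' i ∩ X' j ≠ ∅ ↔ X i ∩ X j ≠ ∅) ∧
      (∀ a b c, X' a = X' b \ X' c ↔ X a = X b \ X c) := by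
  classical
  -- the region (Venn cell) of an element
  set region : ZFSet.{u} → Finset I := fun z => Finset.univ.filter (fun i => z ∈ X i)
    with hregdef
  have hreg : ∀ (z : ZFSet.{u}) (i : I), z ∈ X i ↔ i ∈ region z := by
    intro z i; simp [hregdef]
  set occ : Finset I → Prop := fun r => ∃ z, region z = r with hoccdef
  -- an injective coding of regions in the target universe
  obtain ⟨code, hcode⟩ : ∃ code : Finset I → ZFSet.{w}, Function.Injective code := by
    obtain ⟨f, hf⟩ : ∃ f : ℕ → ZFSet.{w}, Function.Injective f := by
      set f : ℕ → ZFSet.{w} := fun n => Nat.rec ∅ (fun _ ih => insert ih ih) n with hfdef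
      have hrank : ∀ n : ℕ, ZFSet.rank (f n) = (n : Ordinal) := by
        intro n
        induction n with
        | zero => simp [hfdef]
        | succ n ih =>
          have : f (n + 1) = insert (f n) (f n) := rfl
          rw [this, ZFSet.rank_insert, ih, max_eq_left (Order.le_succ _)]
          push_cast
          rw [Ordinal.add_one_eq_succ]
      refine ⟨f, fun m n h => ?_⟩
      have : ((m : ℕ) : Ordinal) = ((n : ℕ) : Ordinal) := by rw [← hrank, ← hrank, h]
      exact_mod_cast this
    exact ⟨fun r => f ((Fintype.equivFin (Finset I)) r),
      hf.comp (Fin.val_injective.comp (Fintype.equivFin (Finset I)).injective)⟩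
  -- the new sets
  set X' : I → ZFSet.{w} := fun i =>
    (((Finset.univ : Finset (Finset I)).filter (fun r => occ r ∧ i ∈ r)).toList).foldr
      (fun r acc => insert (code r) acc) ∅ with hX'def
  have hfold : ∀ (l : List (Finset I)) (y : ZFSet.{w}),
      y ∈ l.foldr (fun r acc => insert (code r) acc) (∅ : ZFSet.{w}) ↔ ∃ r ∈ l, y = code r := by
    intro l y
    induction l with
    | nil => simp [ZFSet.notMem_empty]
    | cons a l ih => simp [ZFSet.mem_insert_iff, ih]
  have hmem : ∀ (i : I) (y : ZFSet.{w}), y ∈ X' i ↔ ∃ r, occ r ∧ i ∈ r ∧ y = code r := by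
    intro i y
    rw [hX'def]
    simp only [hfold, Finset.mem_toList, Finset.mem_filter, Finset.mem_univ, true_and]
    constructor
    · rintro ⟨r, ⟨h1, h2⟩, h3⟩; exact ⟨r, h1, h2, h3⟩
    · rintro ⟨r, h1, h2, h3⟩; exact ⟨r, ⟨h1, h2⟩, h3⟩
  have hcmem : ∀ r : Finset I, occ r → ∀ i : I, (code r ∈ X' i ↔ i ∈ r) := by
    intro r hr i
    rw [hmem]
    constructor
    · rintro ⟨r', h1, h2, h3⟩
      rw [hcode h3]; exact h2
    · intro hi
      exact ⟨r, hr, hi, rfl⟩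
  have hsub : ∀ i j, X' i ⊆ X' j ↔ X i ⊆ X j := by
    intro i j
    constructor
    · intro h z hz
      have h1 : code (region z) ∈ X' i := (hcmem _ ⟨z, rfl⟩ i).2 ((hreg z i).1 hz)
      exact (hreg z j).2 ((hcmem _ ⟨z, rfl⟩ j).1 (h h1))
    · intro h y hy
      obtain ⟨r, hr, hir, rfl⟩ := (hmem i y).1 hy
      obtain ⟨z, rfl⟩ := hr
      exact (hcmem _ ⟨z, rfl⟩ j).2 ((hreg z j).1 (h ((hreg z i).2 hir)))
  have heq : ∀ i j, X' i = X' j ↔ X i = X j := by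
    intro i j
    constructor
    · intro h
      exact ZFSet.ext fun z => ⟨fun hz => (hsub i j).1 (fun _ hw => h ▸ hw) hz,
        fun hz => (hsub j i).1 (fun _ hw => h ▸ hw) hz⟩
    · intro h
      exact ZFSet.ext fun y => ⟨fun hy => (hsub i j).2 (fun _ hw => h ▸ hw) hy,
        fun hy => (hsub j i).2 (fun _ hw => h ▸ hw) hy⟩
  refine ⟨X', hsub, heq, ?_, ?_⟩
  · intro i j
    rw [not_iff_not]
    constructor
    · intro h
      rw [ZFSet.eq_empty]
      intro z hz
      obtain ⟨hzi, hzj⟩ := ZFSet.mem_inter.1 hz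
      have h1 : code (region z) ∈ X' i := (hcmem _ ⟨z, rfl⟩ i).2 ((hreg z i).1 hzi)
      have h2 : code (region z) ∈ X' j := (hcmem _ ⟨z, rfl⟩ j).2 ((hreg z j).1 hzj)
      exact (ZFSet.eq_empty _).1 h _ (ZFSet.mem_inter.2 ⟨h1, h2⟩)
    · intro h
      rw [ZFSet.eq_empty]
      intro y hy
      obtain ⟨hyi, hyj⟩ := ZFSet.mem_inter.1 hy
      obtain ⟨r, hr, hir, rfl⟩ := (hmem i y).1 hyi
      have hjr : j ∈ r := (hcmem r hr j).1 hyj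
      obtain ⟨z, rfl⟩ := hr
      exact (ZFSet.eq_empty _).1 h z
        (ZFSet.mem_inter.2 ⟨(hreg z i).2 hir, (hreg z j).2 hjr⟩)
  · intro a b c
    constructor
    · intro h
      apply ZFSet.ext
      intro z
      rw [ZFSet.mem_sdiff, hreg z a, hreg z b,
        show (z ∈ X c) = (c ∈ region z) from propext (hreg z c),
        ← hcmem _ ⟨z, rfl⟩ a, ← hcmem _ ⟨z, rfl⟩ b, ← hcmem _ ⟨z, rfl⟩ c, h,
        ZFSet.mem_sdiff]
    · intro h
      apply ZFSet.ext
      intro y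
      rw [ZFSet.mem_sdiff]
      constructor
      · intro hy
        obtain ⟨r, hr, har, rfl⟩ := (hmem a y).1 hy
        obtain ⟨z, rfl⟩ := hr
        have hza : z ∈ X a := (hreg z a).2 har
        rw [h, ZFSet.mem_sdiff] at hza
        exact ⟨(hcmem _ ⟨z, rfl⟩ b).2 ((hreg z b).1 hza.1),
          fun hc => hza.2 ((hreg z c).2 ((hcmem _ ⟨z, rfl⟩ c).1 hc))⟩
      · rintro ⟨hyb, hyc⟩
        obtain ⟨r, hr, hbr, rfl⟩ := (hmem b y).1 hyb
        obtain ⟨z, rfl⟩ := hr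
        have hzb : z ∈ X b := (hreg z b).2 hbr
        have hzc : z ∉ X c := fun hc => hyc ((hcmem _ ⟨z, rfl⟩ c).2 ((hreg z c).1 hc))
        have hza : z ∈ X a := by rw [h, ZFSet.mem_sdiff]; exact ⟨hzb, hzc⟩
        exact (hcmem _ ⟨z, rfl⟩ a).2 ((hreg z a).1 hza)



theorem key {V : Type*} [Fintype V] (M T : V → ZFSet.{u}) (S : Finset (V × V))
    (hXi : XiConditions S M T) :
    ∃ M'' : V → ZFSet.{u},
      (∀ a b c : V, M a = M b \ M c → M'' a = M'' b \ M'' c) ∧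
      (∀ a b c : V, M a ≠ M b \ M c → M'' a ≠ M'' b \ M'' c) ∧
      (∀ p ∈ S, M'' p.1 = {M'' p.2}) := by
  classical
  obtain ⟨h1, h2, h3, h4, h5⟩ := hXi
  set K := Fintype.card V with hK
  -- basic consequences of the Ξ-conditions
  have hne : ∀ q ∈ S, ∀ (v : V) (z : ZFSet), z ∈ M q.1 → z ∈ M v → M q.1 ∩ M v ≠ ∅ := by
    intro q hq v z hz hzv hemp
    exact (ZFSet.eq_empty _).1 hemp z (ZFSet.mem_inter.2 ⟨hz, hzv⟩)
  have h3' : ∀ q ∈ S, ∀ (v : V) (z : ZFSet), z ∈ M q.1 → z ∈ M v → M q.1 ⊆ M v := by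
    intro q hq v z hz hzv
    exact h3 q hq v (hne q hq v z hz hzv)
  have hatomeq : ∀ q ∈ S, ∀ r ∈ S, ∀ z : ZFSet,
      z ∈ M q.1 → z ∈ M r.1 → M q.1 = M r.1 ∧ M q.2 = M r.2 := by
    intro q hq r hr z hzq hzr
    have e1 : M q.1 ⊆ M r.1 := h3' q hq r.1 z hzq hzr
    have e2 : M r.1 ⊆ M q.1 := h3' r hr q.1 z hzr hzq
    have e : M q.1 = M r.1 := ZFSet.ext fun w => ⟨fun h => e1 h, fun h => e2 h⟩
    exact ⟨e, (h2 q hq r hr).2 e⟩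
  -- the depth function ρ
  obtain ⟨ρ, hρlt, hρK⟩ : ∃ ρ : V → ℕ,
      (∀ q ∈ S, ∀ (v : V) (z : ZFSet), z ∈ M q.1 → z ∈ M v → ρ q.2 < ρ v) ∧ ∀ v, ρ v ≤ K := by
    refine ⟨fun v => ((Finset.univ : Finset V).filter fun u => T u ⊆ T v ∧ T u ≠ T v).card,
      ?_, ?_⟩
    · intro q hq v z hz hzv
      obtain ⟨hTsub, hTne⟩ := h4 q hq v (hne q hq v z hz hzv)
      apply Finset.card_lt_card
      rw [Finset.ssubset_iff_of_subset]
      · exact ⟨q.2, Finset.mem_filter.2 ⟨Finset.mem_univ _, hTsub, hTne⟩,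
          fun hc => (Finset.mem_filter.1 hc).2.2 rfl⟩
      · intro u hu
        obtain ⟨-, hu1, hu2⟩ := Finset.mem_filter.1 hu
        refine Finset.mem_filter.2 ⟨Finset.mem_univ _, fun w hw => hTsub (hu1 hw), ?_⟩
        intro heq
        apply hTne
        apply ZFSet.ext
        intro w
        refine ⟨fun hw => hTsub hw, fun hw => hu1 ?_⟩
        rw [heq]; exact hw
    · intro v
      simpa using Finset.card_filter_le (Finset.univ : Finset V) _
  -- the high-rank set Ω
  obtain ⟨Ω, hΩmem, hΩrank⟩ : ∃ Ω : ZFSet,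
      (∀ v : V, M v ∈ Ω) ∧ ((K + 3 : ℕ) : Ordinal) ≤ ZFSet.rank Ω := by
    set Ω₀ : ZFSet :=
      (Finset.univ : Finset V).toList.foldr (fun v acc => insert (M v) acc) ∅ with hΩ₀
    have hmem₀ : ∀ v : V, M v ∈ Ω₀ := by
      have hfold : ∀ l : List V, ∀ v ∈ l,
          M v ∈ l.foldr (fun v acc => insert (M v) acc) (∅ : ZFSet) := by
        intro l
        induction l with
        | nil => simp
        | cons a l ih =>
          intro v hv
          rcases List.mem_cons.1 hv with rfl | hv
          · exact ZFSet.mem_insert _ _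
          · exact ZFSet.mem_insert_of_mem _ (ih v hv)
      intro v
      exact hfold _ v (by simp)
    refine ⟨(fun w => insert w w)^[K + 3] Ω₀, ?_, ?_⟩
    · have hsub : ∀ n : ℕ, ∀ y : ZFSet, y ∈ Ω₀ → y ∈ (fun w => insert w w)^[n] Ω₀ := by
        intro n
        induction n with
        | zero => simp
        | succ n ih =>
          intro y hy
          rw [Function.iterate_succ_apply']
          exact ZFSet.mem_insert_of_mem _ (ih y hy)
      exact fun v => hsub _ _ (hmem₀ v)
    · have hit : ∀ n : ℕ, (n : Ordinal) ≤ ZFSet.rank ((fun w => insert w w)^[n] Ω₀) := by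
        intro n
        induction n with
        | zero => simp
        | succ n ih =>
          rw [Function.iterate_succ_apply', ZFSet.rank_insert]
          calc ((n + 1 : ℕ) : Ordinal) = Order.succ (n : Ordinal) := by
                push_cast; rw [Ordinal.add_one_eq_succ]
            _ ≤ Order.succ (ZFSet.rank ((fun w => insert w w)^[n] Ω₀)) :=
                Order.succ_le_succ ih
            _ ≤ _ := le_max_left _ _
      exact hit (K + 3)
  have hzrank : ∀ (v : V) (z : ZFSet), z ∈ M v → ZFSet.rank z < ZFSet.rank Ω :=
    fun v z hz => (ZFSet.rank_lt_of_mem hz).trans (ZFSet.rank_lt_of_mem (hΩmem v))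
  set R : Ordinal := Order.succ (ZFSet.rank Ω) with hR
  have hψrank : ∀ z : ZFSet, ZFSet.rank z < ZFSet.rank Ω →
      ZFSet.rank (insert z {Ω}) = R := by
    intro z hz
    rw [ZFSet.rank_insert, ZFSet.rank_singleton]
    exact max_eq_right (Order.succ_le_succ hz.le)
  have hψinj : ∀ z z' : ZFSet, ZFSet.rank z < ZFSet.rank Ω → ZFSet.rank z' < ZFSet.rank Ω →
      (insert z {Ω} : ZFSet) = insert z' {Ω} → z = z' := by
    intro z z' hz hz' he
    have : z ∈ insert z' ({Ω} : ZFSet) := by rw [← he]; exact ZFSet.mem_insert _ _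
    rcases ZFSet.mem_insert_iff.1 this with h | h
    · exact h
    · exact absurd (ZFSet.mem_singleton.1 h) (fun hzΩ => absurd (hzΩ ▸ hz) (lt_irrefl _))
  -- the replacement function
  set F : ℕ → ZFSet → ZFSet := fAux M S Ω with hF
  have hFneg : ∀ (z : ZFSet) (k : ℕ), (¬ ∃ q, q ∈ S ∧ z ∈ M q.1) →
      F k z = insert z {Ω} := by
    intro z k hat
    cases k with
    | zero => rfl
    | succ k => rw [hF, fAux_succ, fstep_neg _ _ _ _ _ hat]
  -- fuel stability
  have hstab : ∀ n : ℕ, ∀ v : V, ρ v ≤ n → ∀ z, z ∈ M v → ∀ k k' : ℕ,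
      ρ v ≤ k → ρ v ≤ k' → F k z = F k' z := by
    intro n
    induction n using Nat.strong_induction_on with
    | _ n ih =>
      intro v hv z hz k k' hk hk'
      by_cases hat : ∃ q, q ∈ S ∧ z ∈ M q.1
      · obtain ⟨hq₀S, hq₀z⟩ := hat.choose_spec
        have hlt : ρ hat.choose.2 < ρ v := hρlt _ hq₀S v z hq₀z hz
        obtain ⟨k₀, rfl⟩ : ∃ k₀, k = k₀ + 1 := ⟨k - 1, by omega⟩
        obtain ⟨k₁, rfl⟩ : ∃ k₁, k' = k₁ + 1 := ⟨k' - 1, by omega⟩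
        rw [hF, fAux_succ, fAux_succ, fstep_pos _ _ _ _ _ hat, fstep_pos _ _ _ _ _ hat]
        apply image_congr'
        intro z' hz'
        exact ih (ρ hat.choose.2) (lt_of_lt_of_le hlt hv) hat.choose.2 le_rfl z' hz'
          k₀ k₁ (by omega) (by omega)
      · rw [hFneg z _ hat, hFneg z _ hat]
  -- the key computation for atoms
  have hkey : ∀ q ∈ S, ∀ z, z ∈ M q.1 → F K z = ZFSet.image (F K) (M q.2) := by
    intro q hq z hz
    have hat : ∃ q', q' ∈ S ∧ z ∈ M q'.1 := ⟨q, hq, hz⟩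
    have hlt : ρ q.2 < ρ q.1 := hρlt q hq q.1 z hz hz
    have hK1 : ρ q.1 ≤ K := hρK q.1
    obtain ⟨K', hK'⟩ : ∃ K', K = K' + 1 := ⟨K - 1, by omega⟩
    obtain ⟨hcS, hcz⟩ := hat.choose_spec
    have heqv : M hat.choose.2 = M q.2 := (hatomeq _ hcS q hq z hcz hz).2
    rw [hK', hF, fAux_succ, fstep_pos _ _ _ _ _ hat, heqv, ← hF]
    apply image_congr'
    intro z' hz'
    exact hstab (ρ q.2) q.2 le_rfl z' hz' K' (K' + 1) (by omega) (by omega)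
  -- shape of elements of the new sets
  have hshape : ∀ (w : ZFSet) (v : V), w ∈ ZFSet.image (F K) (M v) →
      (∃ z, z ∈ M v ∧ ZFSet.rank z < ZFSet.rank Ω ∧ w = insert z {Ω}) ∨
      (∃ q, q ∈ S ∧ (∃ z, z ∈ M v ∧ z ∈ M q.1) ∧ w = ZFSet.image (F K) (M q.2)) := by
    intro w v hw
    obtain ⟨z, hz, rfl⟩ := ZFSet.mem_image.1 hw
    by_cases hat : ∃ q, q ∈ S ∧ z ∈ M q.1
    · obtain ⟨q, hqS, hqz⟩ := hat
      exact Or.inr ⟨q, hqS, ⟨z, hz, hqz⟩, hkey q hqS z hqz⟩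
    · exact Or.inl ⟨z, hz, hzrank v z hz, hFneg z K hat⟩
  -- rank dichotomy
  have hrk : ∀ n : ℕ, ∀ v : V, ρ v ≤ n →
      ZFSet.rank (ZFSet.image (F K) (M v)) ≤ Order.succ ((ρ v : ℕ) : Ordinal) ∨
      R < ZFSet.rank (ZFSet.image (F K) (M v)) := by
    intro n
    induction n using Nat.strong_induction_on with
    | _ n ih =>
      intro v hv
      by_cases hbig : ∃ w, w ∈ ZFSet.image (F K) (M v) ∧ R ≤ ZFSet.rank w
      · right
        obtain ⟨w, hw, hr⟩ := hbig
        exact lt_of_le_of_lt hr (ZFSet.rank_lt_of_mem hw)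
      · left
        rw [ZFSet.rank_le_iff]
        intro w hw
        rw [Order.lt_succ_iff]
        rcases hshape w v hw with ⟨z, hz, hzr, rfl⟩ | ⟨q, hqS, ⟨z, hz, hzq⟩, rfl⟩
        · exact absurd ⟨_, hw, (hψrank z hzr).ge⟩ hbig
        · have hlt : ρ q.2 < ρ v := hρlt q hqS v z hzq hz
          rcases ih (ρ q.2) (lt_of_lt_of_le hlt hv) q.2 le_rfl with hsm | hbg
          · refine hsm.trans ?_
            calc Order.succ ((ρ q.2 : ℕ) : Ordinal) = ((ρ q.2 + 1 : ℕ) : Ordinal) := by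
                  push_cast; rw [Ordinal.add_one_eq_succ]
              _ ≤ ((ρ v : ℕ) : Ordinal) := by exact_mod_cast hlt
          · exact absurd ⟨_, hw, hbg.le⟩ hbig
  have hrankne : ∀ v : V, ZFSet.rank (ZFSet.image (F K) (M v)) ≠ R := by
    intro v
    rcases hrk (ρ v) v le_rfl with hsm | hbg
    · intro he
      rw [he, hR, Order.succ_le_succ_iff] at hsm
      have h1 : ((ρ v : ℕ) : Ordinal) < ((K + 3 : ℕ) : Ordinal) := by
        exact_mod_cast (by have := hρK v; omega : ρ v < K + 3)
      exact absurd hsm (not_le.2 (lt_of_lt_of_le h1 hΩrank))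
    · exact hbg.ne'
  have hkeptnew : ∀ (z : ZFSet) (v : V), ZFSet.rank z < ZFSet.rank Ω →
      (insert z {Ω} : ZFSet) ≠ ZFSet.image (F K) (M v) := by
    intro z v hz he
    exact hrankne v (he ▸ hψrank z hz)
  -- injectivity on singleton targets
  have hL5 : ∀ n : ℕ, ∀ q, q ∈ S → ∀ r, r ∈ S → ρ q.2 ≤ n → ρ r.2 ≤ n →
      ZFSet.image (F K) (M q.2) = ZFSet.image (F K) (M r.2) → M q.2 = M r.2 := by
    intro n
    induction n using Nat.strong_induction_on with
    | _ n ih =>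
      have core : ∀ q, q ∈ S → ∀ r, r ∈ S → ρ q.2 ≤ n → ρ r.2 ≤ n →
          ZFSet.image (F K) (M q.2) = ZFSet.image (F K) (M r.2) →
          ∀ z, z ∈ M q.2 → z ∈ M r.2 := by
        intro q hq r hr hqn hrn heq z hz
        have hw : F K z ∈ ZFSet.image (F K) (M r.2) := by
          rw [← heq]; exact ZFSet.mem_image.2 ⟨z, hz, rfl⟩
        obtain ⟨z', hz', hfz'⟩ := ZFSet.mem_image.1 hw
        by_cases hat : ∃ s, s ∈ S ∧ z ∈ M s.1
        · obtain ⟨s, hsS, hzs⟩ := hat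
          have e1 : F K z = ZFSet.image (F K) (M s.2) := hkey s hsS z hzs
          by_cases hat' : ∃ t, t ∈ S ∧ z' ∈ M t.1
          · obtain ⟨t, htS, hzt⟩ := hat'
            have e2 : F K z' = ZFSet.image (F K) (M t.2) := hkey t htS z' hzt
            have hst : ZFSet.image (F K) (M s.2) = ZFSet.image (F K) (M t.2) := by
              rw [← e1, ← hfz', e2]
            have hlt1 : ρ s.2 < ρ q.2 := hρlt s hsS q.2 z hzs hz
            have hlt2 : ρ t.2 < ρ r.2 := hρlt t htS r.2 z' hzt hz'
            have hMst : M s.2 = M t.2 :=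
              ih (max (ρ s.2) (ρ t.2)) (by omega) s hsS t htS
                (le_max_left _ _) (le_max_right _ _) hst
            have hMst1 : M s.1 = M t.1 := (h2 s hsS t htS).1 hMst
            exact h3' t htS r.2 z' hzt hz' (by rw [← hMst1]; exact hzs)
          · rw [hFneg z' K hat'] at hfz'
            exact absurd (hfz'.trans e1) (hkeptnew z' s.2 (hzrank r.2 z' hz'))
        · rw [hFneg z K hat] at hfz'
          by_cases hat' : ∃ t, t ∈ S ∧ z' ∈ M t.1
          · obtain ⟨t, htS, hzt⟩ := hat'
            have e2 : F K z' = ZFSet.image (F K) (M t.2) := hkey t htS z' hzt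
            exact absurd (hfz'.symm.trans e2) (hkeptnew z t.2 (hzrank q.2 z hz))
          · rw [hFneg z' K hat'] at hfz'
            have := hψinj z' z (hzrank r.2 z' hz') (hzrank q.2 z hz) hfz'
            rw [← this]; exact hz'
      intro q hq r hr hqn hrn heq
      exact ZFSet.ext fun z => ⟨fun hz => core q hq r hr hqn hrn heq z hz,
        fun hz => core r hr q hq hrn hqn heq.symm z hz⟩
  -- the comparison lemma
  have hcmp : ∀ (z z' : ZFSet) (v v' : V), z ∈ M v → z' ∈ M v' → F K z = F K z' →
      z = z' ∨ ∃ s t, s ∈ S ∧ t ∈ S ∧ z ∈ M s.1 ∧ z' ∈ M t.1 ∧ M s.1 = M t.1 := by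
    intro z z' v v' hz hz' hf
    by_cases hat : ∃ s, s ∈ S ∧ z ∈ M s.1
    · obtain ⟨s, hsS, hzs⟩ := hat
      have e1 : F K z = ZFSet.image (F K) (M s.2) := hkey s hsS z hzs
      by_cases hat' : ∃ t, t ∈ S ∧ z' ∈ M t.1
      · obtain ⟨t, htS, hzt⟩ := hat'
        have e2 : F K z' = ZFSet.image (F K) (M t.2) := hkey t htS z' hzt
        have hst : ZFSet.image (F K) (M s.2) = ZFSet.image (F K) (M t.2) := by
          rw [← e1, hf, e2]
        have hMst : M s.2 = M t.2 :=
          hL5 (max (ρ s.2) (ρ t.2)) s hsS t htS (le_max_left _ _) (le_max_right _ _) hst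
        exact Or.inr ⟨s, t, hsS, htS, hzs, hzt, (h2 s hsS t htS).1 hMst⟩
      · rw [hFneg z' K hat'] at hf
        exact absurd (hf.symm.trans e1) (hkeptnew z' s.2 (hzrank v' z' hz'))
    · rw [hFneg z K hat] at hf
      by_cases hat' : ∃ t, t ∈ S ∧ z' ∈ M t.1
      · obtain ⟨t, htS, hzt⟩ := hat'
        have e2 : F K z' = ZFSet.image (F K) (M t.2) := hkey t htS z' hzt
        exact absurd (hf.trans e2) (hkeptnew z t.2 (hzrank v z hz))
      · rw [hFneg z' K hat'] at hf
        exact Or.inl (hψinj z z' (hzrank v z hz) (hzrank v' z' hz') hf)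
  -- image of a difference
  have hdiff : ∀ b c : V,
      ZFSet.image (F K) (M b) \ ZFSet.image (F K) (M c) = ZFSet.image (F K) (M b \ M c) := by
    intro b c
    apply ZFSet.ext
    intro w
    rw [ZFSet.mem_sdiff]
    constructor
    · rintro ⟨hwb, hwc⟩
      obtain ⟨z, hz, rfl⟩ := ZFSet.mem_image.1 hwb
      exact ZFSet.mem_image.2 ⟨z, ZFSet.mem_sdiff.2
        ⟨hz, fun hzc => hwc (ZFSet.mem_image.2 ⟨z, hzc, rfl⟩)⟩, rfl⟩
    · intro hw
      obtain ⟨z, hzd, rfl⟩ := ZFSet.mem_image.1 hw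
      obtain ⟨hzb, hzc⟩ := ZFSet.mem_sdiff.1 hzd
      refine ⟨ZFSet.mem_image.2 ⟨z, hzb, rfl⟩, fun hwc => ?_⟩
      obtain ⟨z', hz', hfz'⟩ := ZFSet.mem_image.1 hwc
      rcases hcmp z' z c b hz' hzb hfz' with rfl | ⟨s, t, hsS, htS, hzs', hzt, hst⟩
      · exact hzc hz'
      · exact hzc (h3' s hsS c z' hzs' hz' (by rw [hst]; exact hzt))
  -- subset comparison
  have hsub : ∀ X Y : ZFSet, (∀ z, z ∈ X → ∃ v : V, z ∈ M v) →
      (∀ z, z ∈ Y → ∃ v : V, z ∈ M v) →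
      (∀ t, t ∈ S → ∀ z', z' ∈ M t.1 → z' ∈ Y → M t.1 ⊆ Y) →
      ZFSet.image (F K) X = ZFSet.image (F K) Y → X ⊆ Y := by
    intro X Y hcovX hcovY hclY heq z hz
    have hw : F K z ∈ ZFSet.image (F K) Y := by
      rw [← heq]; exact ZFSet.mem_image.2 ⟨z, hz, rfl⟩
    obtain ⟨z', hz', hfz'⟩ := ZFSet.mem_image.1 hw
    obtain ⟨v, hv⟩ := hcovX z hz
    obtain ⟨v', hv'⟩ := hcovY z' hz'
    rcases hcmp z' z v' v hv' hv hfz' with rfl | ⟨s, t, hsS, htS, hzs', hzt, hst⟩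
    · exact hz'
    · exact hclY s hsS z' hzs' hz' (by rw [hst]; exact hzt)
  -- assemble the witness
  refine ⟨fun v => ZFSet.image (F K) (M v), ?_, ?_, ?_⟩
  · intro a b c h
    show ZFSet.image (F K) (M a) =
      ZFSet.image (F K) (M b) \ ZFSet.image (F K) (M c)
    rw [hdiff b c, h]
  · intro a b c hne' heq
    apply hne'
    replace heq : ZFSet.image (F K) (M a) =
        ZFSet.image (F K) (M b) \ ZFSet.image (F K) (M c) := heq
    rw [hdiff b c] at heq
    have hs1 : M a ⊆ M b \ M c := by
      apply hsub (M a) (M b \ M c) (fun z hz => ⟨a, hz⟩)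
        (fun z hz => ⟨b, (ZFSet.mem_sdiff.1 hz).1⟩) ?_ heq
      intro t htS z' hzt' hz'Y w hw
      obtain ⟨hz'b, hz'c⟩ := ZFSet.mem_sdiff.1 hz'Y
      refine ZFSet.mem_sdiff.2 ⟨h3' t htS b z' hzt' hz'b hw, fun hwc => ?_⟩
      exact hz'c (h3' t htS c w hw hwc hzt')
    have hs2 : M b \ M c ⊆ M a := by
      apply hsub (M b \ M c) (M a) (fun z hz => ⟨b, (ZFSet.mem_sdiff.1 hz).1⟩)
        (fun z hz => ⟨a, hz⟩) ?_ heq.symm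
      intro t htS z' hzt' hz'Y
      exact h3' t htS a z' hzt' hz'Y
    exact ZFSet.ext fun z => ⟨fun hz => hs1 hz, fun hz => hs2 hz⟩
  · intro p hp
    show ZFSet.image (F K) (M p.1) = {ZFSet.image (F K) (M p.2)}
    apply ZFSet.ext
    intro w
    rw [ZFSet.mem_singleton]
    constructor
    · intro hw
      obtain ⟨z, hz, rfl⟩ := ZFSet.mem_image.1 hw
      exact hkey p hp z hz
    · rintro rfl
      obtain ⟨z, hz, -⟩ : ∃ z, z ∈ M p.1 ∧ z ∉ M p.2 := by
        by_contra hc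
        push_neg at hc
        exact h1 p hp fun z hz => hc z hz
      exact ZFSet.mem_image.2 ⟨z, hz, hkey p hp z hz⟩

end XiSatAux


theorem xi_sat_implies_system_sat {V : Type*} [Fintype V]
    (P N : Finset (V × V × V)) (S : Finset (V × V))
    (h : ∃ M T : V → ZFSet, ModelsLits P N M ∧ XiConditions S M T) :
    ∃ M'' : V → ZFSet, ModelsSystem P N S M'' := by
  classical
  obtain ⟨M, T, hlits, hXi⟩ := h
  obtain ⟨M', hMsub, hMeq, hMint, hMdiff⟩ := XiSatAux.regionize M
  obtain ⟨T', hTsub, hTeq, hTint, hTdiff⟩ := XiSatAux.regionize T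
  obtain ⟨h1, h2, h3, h4, h5⟩ := hXi
  have hlits' : ModelsLits P N M' := ⟨fun t ht => (hMdiff _ _ _).2 (hlits.1 t ht),
    fun t ht hc => hlits.2 t ht ((hMdiff _ _ _).1 hc)⟩
  have hXi' : XiConditions S M' T' := by
    refine ⟨?_, ?_, ?_, ?_, ?_⟩
    · intro p hp hc; exact h1 p hp ((hMsub _ _).1 hc)
    · intro p hp q hq
      rw [hMeq, hMeq]; exact h2 p hp q hq
    · intro p hp v hv
      rw [hMsub]; exact h3 p hp v ((hMint _ _).1 hv)
    · intro p hp v hv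
      obtain ⟨ha, hb⟩ := h4 p hp v ((hMint _ _).1 hv)
      exact ⟨(hTsub _ _).2 ha, fun hc => hb ((hTeq _ _).1 hc)⟩
    · intro u v huv
      exact (hTeq _ _).2 (h5 u v ((hMeq _ _).1 huv))
  obtain ⟨M'', hpos, hneg, hsing⟩ := XiSatAux.key M' T' S hXi'
  exact ⟨M'', ⟨⟨fun t ht => hpos _ _ _ (hlits'.1 t ht),
    fun t ht => hneg _ _ _ (hlits'.2 t ht)⟩, hsing⟩⟩
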